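/- Define L_k = { w ∈ L_{k-1} | w can be embedded into R_{k-1} } and R_k = { w ∈ R_{k-1} | w can be embedded into L_k } for languages L_0, R_0 over a finite alphabet. Then there exists a constant B ≥ 1 such that L_B = L_{B+1} and R_B = R_{B+1}. -/

import Mathlib

theorem sequence_stabilizes {α : Type*} [Fintype α]
    (L R : ℕ → Set (List α))
    (hL : ∀ k, L (k + 1) = {w ∈ L k | ∃ u ∈ R k, w.Sublist u})
    (hR : ∀ k, R (k + 1) = {w ∈ R k | ∃ u ∈ L (k + 1), w.Sublist u}) :
    ∃ B : ℕ, 1 ≤ B ∧ L B = L (B + 1) ∧ R B = R (B + 1) := by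
  -- L is antitone
  have hLsub : ∀ k, L (k + 1) ⊆ L k := fun k w hw => by rw [hL k] at hw; exact hw.1
  have hLanti : ∀ m n, m ≤ n → L n ⊆ L m := by
    intro m n h
    induction n with
    | zero => simp_all
    | succ n ih =>
      rcases Nat.lt_or_ge m (n+1) with h' | h'
      · exact ((hLsub n).trans (ih (Nat.lt_succ_iff.mp h')))
      · have : m = n + 1 := le_antisymm h h'
        subst this; exact subset_rfl
  -- if L stabilizes at B ≥ 1, then R stabilizes too
  suffices h : ∃ B : ℕ, 1 ≤ B ∧ L B = L (B + 1) by
    obtain ⟨B, hB1, hBL⟩ := h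
    refine ⟨B, hB1, hBL, ?_⟩
    obtain ⟨C, rfl⟩ := Nat.exists_eq_add_of_le hB1
    ext w
    simp only [Nat.add_comm 1 C] at hBL ⊢
    rw [hR (C + 1), ← hBL, hR C]
    constructor
    · rintro ⟨hw, u, hu, hsub⟩
      exact ⟨⟨hw, u, hu, hsub⟩, u, hu, hsub⟩
    · rintro ⟨⟨hw, hu⟩, _⟩
      exact ⟨hw, hu⟩
  -- suppose L never stabilizes from index 1 onwards
  by_contra hcon
  push_neg at hcon
  have hstrict : ∀ k, 1 ≤ k → ∃ w, w ∈ L k ∧ w ∉ L (k + 1) := by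
    intro k hk
    have hne := hcon k hk
    have := hLsub k
    rcases Set.not_subset.mp (fun hs => hne (le_antisymm hs this)) with ⟨w, hw1, hw2⟩
    exact ⟨w, hw1, hw2⟩
  choose f hf1 hf2 using fun n => hstrict (n + 1) (Nat.le_add_left 1 n)
  -- Higman's lemma
  have hpwo : {l : List α | ∀ x, x ∈ l → x ∈ (Set.univ : Set α)}.PartiallyWellOrderedOn
      (List.SublistForall₂ (· = · : α → α → Prop)) :=
    Set.PartiallyWellOrderedOn.partiallyWellOrderedOn_sublistForall₂ _
      (Set.finite_univ.partiallyWellOrderedOn)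
  obtain ⟨m, n, hmn, hrel⟩ := hpwo (fun k => ⟨f k, fun x _ => Set.mem_univ x⟩)
  replace hrel : List.SublistForall₂ (· = · : α → α → Prop) (f m) (f n) := hrel
  rw [List.sublistForall₂_iff] at hrel
  obtain ⟨l, hfor, hsub⟩ := hrel
  rw [List.forall₂_eq_eq_eq] at hfor
  subst hfor
  -- f n ∈ L (n+1) ⊆ L (m+2)
  have hfn : f n ∈ L (m + 2) := hLanti (m + 2) (n + 1) (by omega) (hf1 n)
  rw [hL (m + 1)] at hfn
  obtain ⟨_, u, hu, hsub'⟩ := hfn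
  exact hf2 m (by rw [hL (m + 1)]; exact ⟨hf1 m, u, hu, hsub.trans hsub'⟩)
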